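/- Let (X,T) be a point transitive flow such that the proximal relation P(X) is an equivalence relation. Then the proximal relation P(E(X)) on the flow (E(X),T) is also an equivalence relation. -/

import Mathlib

/-- The enveloping semigroup of the flow `(X,T)`. -/
def envSemigroup (T X : Type*) [Group T] [TopologicalSpace X] [MulAction T X] :
    Set (X → X) :=
  closure (Set.range fun t : T => fun x : X => t • x)

/-- Proximality for a `T`-action `act` on a space `Y`: the orbit closure of the pair
meets the diagonal (equivalently, some net `t_i` with `lim t_i y₁ = lim t_i y₂`). -/
def ProximalPair (T : Type*) {Y : Type*} [Group T] [TopologicalSpace Y]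
    (act : T → Y → Y) (y₁ y₂ : Y) : Prop :=
  ∃ z ∈ closure {w : Y × Y | ∃ t : T, w = (act t y₁, act t y₂)}, z.1 = z.2

section Aux

variable {T X : Type*} [Group T] [TopologicalSpace X] [CompactSpace X] [T2Space X] [MulAction T X]

/-- Closed left ideal of the enveloping semigroup. -/
def IsLIdeal (T : Type*) {X : Type*} [Group T] [TopologicalSpace X] [MulAction T X]
    (L : Set (X → X)) : Prop :=
  L.Nonempty ∧ IsClosed L ∧ L ⊆ envSemigroup T X ∧
    ∀ s ∈ envSemigroup T X, ∀ a ∈ L, s ∘ a ∈ L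

lemma env_isClosed : IsClosed (envSemigroup T X) := isClosed_closure

lemma env_isCompact : IsCompact (envSemigroup T X) := (env_isClosed (T := T)).isCompact

lemma cont_comp_right (g : X → X) : Continuous fun p : X → X => p ∘ g :=
  continuous_pi fun x => continuous_apply (g x)

lemma smul_mem_env (t : T) : (fun x : X => t • x) ∈ envSemigroup T X :=
  subset_closure ⟨t, rfl⟩

lemma smul_comp_mem_env (hc : ∀ t : T, Continuous fun x : X => t • x)
    {p : X → X} (hp : p ∈ envSemigroup T X) (t : T) :
    ((fun x : X => t • x) ∘ p) ∈ envSemigroup T X := by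
  have hcont : Continuous fun q : X → X => (fun x : X => t • x) ∘ q :=
    continuous_pi fun x => (hc t).comp (continuous_apply x)
  have hmaps : Set.MapsTo (fun q : X → X => (fun x : X => t • x) ∘ q)
      (Set.range fun t : T => fun x : X => t • x)
      (Set.range fun t : T => fun x : X => t • x) := by
    rintro _ ⟨t', rfl⟩
    exact ⟨t * t', funext fun x => (mul_smul t t' x)⟩
  exact map_mem_closure hcont hp hmaps

lemma comp_mem_env (hc : ∀ t : T, Continuous fun x : X => t • x)
    {p g : X → X} (hp : p ∈ envSemigroup T X) (hg : g ∈ envSemigroup T X) :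
    p ∘ g ∈ envSemigroup T X := by
  have hmaps : Set.MapsTo (fun q : X → X => q ∘ g)
      (Set.range fun t : T => fun x : X => t • x) (envSemigroup T X) := by
    rintro _ ⟨t, rfl⟩
    exact smul_comp_mem_env hc hg t
  have := map_mem_closure (cont_comp_right g) hp hmaps
  rwa [(env_isClosed (T := T)).closure_eq] at this

lemma closure_image_range {Y : Type*} [TopologicalSpace Y] [T2Space Y]
    {F : (X → X) → Y} (hF : Continuous F) :
    closure (F '' (Set.range fun t : T => fun x : X => t • x)) = F '' envSemigroup T X := by
  apply Set.Subset.antisymm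
  · exact closure_minimal (Set.image_mono (f := F) subset_closure)
      ((env_isCompact (T := T)).image hF).isClosed
  · exact image_closure_subset_closure_image hF

lemma proximal_iff_X (y₁ y₂ : X) :
    ProximalPair T (fun t (x : X) => t • x) y₁ y₂ ↔
      ∃ s ∈ envSemigroup T X, s y₁ = s y₂ := by
  have hF : Continuous fun g : X → X => (g y₁, g y₂) :=
    (continuous_apply y₁).prodMk (continuous_apply y₂)
  have hset : {w : X × X | ∃ t : T, w = (t • y₁, t • y₂)}
      = (fun g : X → X => (g y₁, g y₂)) '' (Set.range fun t : T => fun x : X => t • x) := by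
    ext w
    constructor
    · rintro ⟨t, rfl⟩
      exact ⟨fun x => t • x, ⟨t, rfl⟩, rfl⟩
    · rintro ⟨g, ⟨t, rfl⟩, rfl⟩
      exact ⟨t, rfl⟩
  constructor
  · rintro ⟨z, hz, hz12⟩
    rw [hset, closure_image_range hF] at hz
    obtain ⟨s, hs, rfl⟩ := hz
    exact ⟨s, hs, hz12⟩
  · rintro ⟨s, hs, hseq⟩
    refine ⟨(s y₁, s y₂), ?_, hseq⟩
    rw [hset, closure_image_range hF]
    exact ⟨s, hs, rfl⟩

lemma proximal_iff_env (p q : X → X) :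
    ProximalPair T (fun t (g : X → X) => (fun x : X => t • x) ∘ g) p q ↔
      ∃ s ∈ envSemigroup T X, s ∘ p = s ∘ q := by
  have hF : Continuous fun g : X → X => (g ∘ p, g ∘ q) :=
    (cont_comp_right p).prodMk (cont_comp_right q)
  have hset : {w : (X → X) × (X → X) |
        ∃ t : T, w = ((fun x : X => t • x) ∘ p, (fun x : X => t • x) ∘ q)}
      = (fun g : X → X => (g ∘ p, g ∘ q)) '' (Set.range fun t : T => fun x : X => t • x) := by
    ext w
    constructor
    · rintro ⟨t, rfl⟩
      exact ⟨fun x => t • x, ⟨t, rfl⟩, rfl⟩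
    · rintro ⟨g, ⟨t, rfl⟩, rfl⟩
      exact ⟨t, rfl⟩
  constructor
  · rintro ⟨z, hz, hz12⟩
    rw [hset, closure_image_range hF] at hz
    obtain ⟨s, hs, rfl⟩ := hz
    exact ⟨s, hs, hz12⟩
  · rintro ⟨s, hs, hseq⟩
    refine ⟨(s ∘ p, s ∘ q), ?_, hseq⟩
    rw [hset, closure_image_range hF]
    exact ⟨s, hs, rfl⟩

/-- Every nonempty closed left ideal contains a minimal closed left ideal. -/
lemma exists_minimal_ideal {D : Set (X → X)} (hD : IsLIdeal T D) :
    ∃ L, IsLIdeal T L ∧ L ⊆ D ∧ ∀ A, IsLIdeal T A → A ⊆ L → A = L := by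
  set S : Set (Set (X → X)) := {L | IsLIdeal T L ∧ L ⊆ D} with hS
  have hH : ∀ c ⊆ S, IsChain (· ⊆ ·) c → c.Nonempty → ∃ lb ∈ S, ∀ s ∈ c, lb ⊆ s := by
    rintro c hcS hchain ⟨L₀, hL₀⟩
    haveI : Nonempty c := ⟨⟨L₀, hL₀⟩⟩
    have hnon : (⋂₀ c).Nonempty := by
      apply IsCompact.nonempty_sInter_of_directed_nonempty_isCompact_isClosed
      · exact (IsChain.directedOn hchain.symm)
      · exact fun U hU => (hcS hU).1.1
      · exact fun U hU => (hcS hU).1.2.1.isCompact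
      · exact fun U hU => (hcS hU).1.2.1
    refine ⟨⋂₀ c, ⟨⟨hnon, isClosed_sInter fun U hU => (hcS hU).1.2.1, ?_, ?_⟩, ?_⟩,
      fun s hs => Set.sInter_subset_of_mem hs⟩
    · exact (Set.sInter_subset_of_mem hL₀).trans (hcS hL₀).1.2.2.1
    · intro s hs a ha
      rw [Set.mem_sInter] at ha ⊢
      exact fun U hU => (hcS hU).1.2.2.2 s hs a (ha U hU)
    · exact (Set.sInter_subset_of_mem hL₀).trans (hcS hL₀).2
  obtain ⟨m, hmD, hmin⟩ := zorn_superset_nonempty S hH D ⟨hD, Set.Subset.rfl⟩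
  refine ⟨m, hmin.prop.1, hmD, fun A hA hAm => ?_⟩
  exact hmin.eq_of_subset ⟨hA, hAm.trans hmD⟩ hAm

/-- Every closed left ideal contains an idempotent (Ellis–Numakura). -/
lemma exists_idem' {L : Set (X → X)} (hL : IsLIdeal T L) : ∃ u ∈ L, u ∘ u = u := by
  letI : Semigroup (X → X) :=
    { mul := fun f g => f ∘ g
      mul_assoc := fun f g h => rfl }
  have hcont : ∀ r : X → X, Continuous (· * r) := fun r => cont_comp_right r
  have hmul : ∀ x ∈ L, ∀ y ∈ L, x * y ∈ L := fun x hx y hy =>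
    hL.2.2.2 x (hL.2.2.1 hx) y hy
  obtain ⟨m, hm, hmm⟩ := exists_idempotent_in_compact_subsemigroup hcont L hL.1
    hL.2.1.isCompact hmul
  exact ⟨m, hm, hmm⟩

/-- Key lemma: if `P(X)` is an equivalence relation, then an idempotent of one minimal
left ideal lies in every other closed left ideal. -/
lemma idem_mem_other (hEq : Equivalence (ProximalPair T fun t (x : X) => t • x))
    {L₁ L₂ : Set (X → X)} (h₁ : IsLIdeal T L₁) (h₂ : IsLIdeal T L₂)
    (hmin₁ : ∀ A, IsLIdeal T A → A ⊆ L₁ → A = L₁)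
    {u v : X → X} (hu : u ∈ L₁) (huu : u ∘ u = u) (hv : v ∈ L₂) (hvv : v ∘ v = v) :
    u ∈ L₂ := by
  have huE : u ∈ envSemigroup T X := h₁.2.2.1 hu
  have hvE : v ∈ envSemigroup T X := h₂.2.2.1 hv
  have key : ∀ x : X, u (v x) = u x := by
    intro x
    -- chain of proximal pairs in X
    have h1 : ProximalPair T (fun t (x : X) => t • x) (u x) x :=
      (proximal_iff_X _ _).2 ⟨u, huE, congrFun huu x⟩
    have h2 : ProximalPair T (fun t (x : X) => t • x) x (v x) :=
      (proximal_iff_X _ _).2 ⟨v, hvE, (congrFun hvv x).symm⟩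
    have h3 : ProximalPair T (fun t (x : X) => t • x) (v x) (u (v x)) :=
      (proximal_iff_X _ _).2 ⟨u, huE, (congrFun huu (v x)).symm⟩
    have h4 : ProximalPair T (fun t (x : X) => t • x) (u x) (u (v x)) :=
      hEq.trans h1 (hEq.trans h2 h3)
    obtain ⟨s, hsE, hs⟩ := (proximal_iff_X _ _).1 h4
    -- the agreement set is a closed left ideal inside L₁
    set A : Set (X → X) := {a ∈ L₁ | a (u x) = a (v x)} with hA
    have hAideal : IsLIdeal T A := by
      refine ⟨⟨s ∘ u, ?_⟩, ?_, ?_, ?_⟩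
      · refine ⟨h₁.2.2.2 s hsE u hu, ?_⟩
        show s (u (u x)) = s (u (v x))
        rw [show u (u x) = u x from congrFun huu x]
        exact hs
      · exact IsClosed.inter h₁.2.1
          (isClosed_eq (continuous_apply (u x)) (continuous_apply (v x)))
      · exact fun a ha => h₁.2.2.1 ha.1
      · rintro s' hs' a ⟨haL, haeq⟩
        refine ⟨h₁.2.2.2 s' hs' a haL, ?_⟩
        show s' (a (u x)) = s' (a (v x))
        rw [haeq]
    have hAL : A = L₁ := hmin₁ A hAideal (Set.sep_subset _ _)
    have huA : u ∈ A := hAL ▸ hu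
    have : u (u x) = u (v x) := huA.2
    rw [show u (u x) = u x from congrFun huu x] at this
    exact this.symm
  have huv : u ∘ v = u := funext fun x => key x
  have : u ∘ v ∈ L₂ := h₂.2.2.2 u huE v hv
  rwa [huv] at this

end Aux

/-- If `(X,T)` is a point transitive flow whose proximal relation is an equivalence
relation, then the proximal relation of the flow `(E(X),T)` is also an equivalence
relation (on `E(X)`). -/
theorem proximal_equivalence_on_envelope
    {T X : Type*} [Group T] [TopologicalSpace X] [CompactSpace X] [T2Space X] [MulAction T X]
    (hc : ∀ t : T, Continuous fun x : X => t • x)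
    (htrans : ∃ x₀ : X, Dense (Set.range fun t : T => t • x₀))
    (hEq : Equivalence (ProximalPair T fun t (x : X) => t • x)) :
    (∀ p ∈ envSemigroup T X,
        ProximalPair T (fun t (g : X → X) => (fun x : X => t • x) ∘ g) p p) ∧
    (∀ p ∈ envSemigroup T X, ∀ q ∈ envSemigroup T X,
        ProximalPair T (fun t (g : X → X) => (fun x : X => t • x) ∘ g) p q →
        ProximalPair T (fun t (g : X → X) => (fun x : X => t • x) ∘ g) q p) ∧
    (∀ p ∈ envSemigroup T X, ∀ q ∈ envSemigroup T X, ∀ r ∈ envSemigroup T X,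
        ProximalPair T (fun t (g : X → X) => (fun x : X => t • x) ∘ g) p q →
        ProximalPair T (fun t (g : X → X) => (fun x : X => t • x) ∘ g) q r →
        ProximalPair T (fun t (g : X → X) => (fun x : X => t • x) ∘ g) p r) := by
  refine ⟨?_, ?_, ?_⟩
  · -- reflexivity
    intro p _
    exact ⟨((fun x : X => (1 : T) • x) ∘ p, (fun x : X => (1 : T) • x) ∘ p),
      subset_closure ⟨1, rfl⟩, rfl⟩
  · -- symmetry
    intro p _ q _ hpq
    obtain ⟨s, hsE, hs⟩ := (proximal_iff_env p q).1 hpq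
    exact (proximal_iff_env q p).2 ⟨s, hsE, hs.symm⟩
  · -- transitivity
    intro p _ q _ r _ hpq hqr
    obtain ⟨s, hsE, hs⟩ := (proximal_iff_env p q).1 hpq
    obtain ⟨s', hs'E, hs'⟩ := (proximal_iff_env q r).1 hqr
    -- the witness sets are closed left ideals
    have hD₁ : IsLIdeal T {a ∈ envSemigroup T X | a ∘ p = a ∘ q} := by
      refine ⟨⟨s, hsE, hs⟩, ?_, fun a ha => ha.1, ?_⟩
      · exact IsClosed.inter (env_isClosed (T := T))
          (isClosed_eq (cont_comp_right p) (cont_comp_right q))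
      · rintro s₁ hs₁ a ⟨haE, haeq⟩
        refine ⟨comp_mem_env hc hs₁ haE, ?_⟩
        show s₁ ∘ (a ∘ p) = s₁ ∘ (a ∘ q)
        rw [haeq]
    have hD₂ : IsLIdeal T {a ∈ envSemigroup T X | a ∘ q = a ∘ r} := by
      refine ⟨⟨s', hs'E, hs'⟩, ?_, fun a ha => ha.1, ?_⟩
      · exact IsClosed.inter (env_isClosed (T := T))
          (isClosed_eq (cont_comp_right q) (cont_comp_right r))
      · rintro s₁ hs₁ a ⟨haE, haeq⟩
        refine ⟨comp_mem_env hc hs₁ haE, ?_⟩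
        show s₁ ∘ (a ∘ q) = s₁ ∘ (a ∘ r)
        rw [haeq]
    obtain ⟨L₁, hL₁, hL₁D, hmin₁⟩ := exists_minimal_ideal hD₁
    obtain ⟨L₂, hL₂, hL₂D, _⟩ := exists_minimal_ideal hD₂
    obtain ⟨u, huL₁, huu⟩ := exists_idem' hL₁
    obtain ⟨v, hvL₂, hvv⟩ := exists_idem' hL₂
    have huL₂ : u ∈ L₂ := idem_mem_other hEq hL₁ hL₂ hmin₁ huL₁ huu hvL₂ hvv
    have h1 : u ∘ p = u ∘ q := (hL₁D huL₁).2
    have h2 : u ∘ q = u ∘ r := (hL₂D huL₂).2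
    exact (proximal_iff_env p r).2 ⟨u, hL₁.2.2.1 huL₁, h1.trans h2⟩
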